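/- Let η = (z, d₀, d₁, …, d_r) ∈ Ω and 1 ≤ l < j ≤ n. (i) If v_{l,η} = (p_l, 0) and v_{j,η} = (p_j, 0), then π₁(v_{j,η} + (n−j)·(1,1)) ≤ π₁(v_{l,η} + (n−l)·(1,1)), with equality if and only if there exists 1 ≤ t ≤ r with Σ_{i=0}^{t−1} d_i < l < j ≤ Σ_{i=0}^{t} d_i. (ii) If v_{l,η} = (0, p_l) and v_{j,η} = (0, p_j), then π₂(v_{j,η} + (n−j)·(1,1)) ≤ π₂(v_{l,η} + (n−l)·(1,1)), with equality if and only if there exists 1 ≤ t ≤ r with Σ_{i=0}^{t−1} d_i < l < j ≤ Σ_{i=0}^{t} d_i. -/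

import Mathlib

open Finset

/-- `Λ_{2,n}`: pairs `α ∈ ℕ²` with `1 ≤ α₁ + α₂ ≤ n`. -/
def Lam2 (n : ℕ) : Finset (ℕ × ℕ) :=
  ((range (n+1)) ×ˢ (range (n+1))).filter (fun α => 1 ≤ α.1 + α.2 ∧ α.1 + α.2 ≤ n)

/-- `v̄ ∈ ℂ^{Λ_{2,n}}`, with `α`-coordinate `C(v₁,α₁)·C(v₂,α₂)`. -/
noncomputable def vbar (n : ℕ) (v : ℕ × ℕ) : (Lam2 n) → ℂ :=
  fun α => ((v.1.choose α.1.1 * v.2.choose α.1.2 : ℕ) : ℂ)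

/-- `Λ_{3,n}`: triples `β ∈ ℕ³` with `1 ≤ β₁ + β₂ + β₃ ≤ n`. -/
def Lam3 (n : ℕ) : Finset (ℕ × ℕ × ℕ) :=
  ((range (n+1)) ×ˢ (range (n+1)) ×ˢ (range (n+1))).filter
    (fun β => 1 ≤ β.1 + β.2.1 + β.2.2 ∧ β.1 + β.2.1 + β.2.2 ≤ n)

/-- The linear map `A_n : ℕ³ → ℕ²` with matrix rows `(1,1,n)` and `(0,1,n+1)`. -/
def Amap (n : ℕ) (β : ℕ × ℕ × ℕ) : ℕ × ℕ :=
  (β.1 + β.2.1 + n * β.2.2, β.2.1 + (n+1) * β.2.2)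

/-- `c_β = Σ_{γ ≤ β} (−1)^{|β−γ|} C(β,γ) (A_nγ)‾`. -/
noncomputable def cvec (n : ℕ) (β : ℕ × ℕ × ℕ) : (Lam2 n) → ℂ :=
  ∑ γ ∈ (range (β.1+1)) ×ˢ (range (β.2.1+1)) ×ˢ (range (β.2.2+1)),
    (((-1 : ℂ) ^ ((β.1 + β.2.1 + β.2.2) - (γ.1 + γ.2.1 + γ.2.2))) *
      ((β.1.choose γ.1 * β.2.1.choose γ.2.1 * β.2.2.choose γ.2.2 : ℕ) : ℂ)) •
      vbar n (Amap n γ)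

/-- `J ∈ S_{A_n}`: `J ⊆ Λ_{3,n}`, `|J| = λ_{2,n}`, `det L^c_J ≠ 0`. -/
def memSA (n : ℕ) (J : Finset (ℕ × ℕ × ℕ)) : Prop :=
  J ⊆ Lam3 n ∧ J.card = (Lam2 n).card ∧
    ∀ e : (Lam2 n) ≃ J,
      (Matrix.of fun i j : (Lam2 n) => cvec n (e i).1 j).det ≠ 0

/-- `m_J = Σ_{β ∈ J} A_nβ`. -/
def mJ (n : ℕ) (J : Finset (ℕ × ℕ × ℕ)) : ℕ × ℕ := ∑ β ∈ J, Amap n β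

/-- `f_k(v) = k·v₁ + (1−k)·v₂`. -/
def fk (k : ℕ) (v : ℕ × ℕ) : ℤ := (k : ℤ) * v.1 + (1 - (k : ℤ)) * v.2

/-- Data of a sequence `η = (z, d₀, d₁, …, d_r)`. -/
structure OmegaData where
  r : ℕ
  z : Bool
  d : ℕ → ℕ

/-- `η ∈ Ω`: `d₀ = 0`, `d_i ≥ 1` for `1 ≤ i ≤ r` (and `d_i = 0` beyond `r`),
and `d₀ + ⋯ + d_r = n`. -/
def OmegaData.IsOmega (n : ℕ) (η : OmegaData) : Prop :=
  η.d 0 = 0 ∧ (∀ i, 1 ≤ i → i ≤ η.r → 1 ≤ η.d i) ∧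
  (∀ i, η.r < i → η.d i = 0) ∧
  (∑ i ∈ range (η.r + 1), η.d i) = n

/-- The unique `t` with `Σ_{i=0}^{t−1} d_i < j ≤ Σ_{i=0}^{t} d_i`. -/
noncomputable def tIdx (η : OmegaData) (j : ℕ) : ℕ :=
  sInf {t | j ≤ ∑ i ∈ range (t+1), η.d i}

/-- The vector `v_{j,η} ∈ ℕ²`. -/
noncomputable def vvec (η : OmegaData) (j : ℕ) : ℕ × ℕ :=
  let t := tIdx η j
  let c := j - ∑ i ∈ range t, η.d i
  let a := (∑ i ∈ range t, if (Odd i ↔ Odd t) then η.d i else 0) + c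
  if (η.z = true) ↔ Odd t then (a, 0) else (0, a)

/-- `T_{j,η}` for `1 ≤ j ≤ n`, and `T_{0,η} = {(1,1),…,(n,n)}`. -/
noncomputable def Tj (n : ℕ) (η : OmegaData) (j : ℕ) : Finset (ℕ × ℕ) :=
  if j = 0 then (range n).image (fun q => (q+1, q+1))
  else (range (n - j + 1)).image (fun p => vvec η j + (p, p))

/-- `T_η = ⋃_{j=0}^{n} T_{j,η}`. -/
noncomputable def Tset (n : ℕ) (η : OmegaData) : Finset (ℕ × ℕ) :=
  (range (n+1)).biUnion (fun j => Tj n η j)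

/-- `r_{i,η} = n·π₂(v_{i,η})`. -/
noncomputable def rshift (n : ℕ) (η : OmegaData) (i : ℕ) : ℕ := n * (vvec η i).2

/-- `T'_η = T_{0,η} ∪ ⋃_{i=1}^{n} (T_{i,η} + r_{i,η})`. -/
noncomputable def Tset' (n : ℕ) (η : OmegaData) : Finset (ℕ × ℕ) :=
  Tj n η 0 ∪ (Finset.Icc 1 n).biUnion
    (fun i => (Tj n η i).image (fun v => v + (rshift n η i, rshift n η i)))

/-- `J_η`: the (unique) subset of `Λ_{3,n}` with `A_n(J_η) = T'_η`. -/
noncomputable def Jset (n : ℕ) (η : OmegaData) : Finset (ℕ × ℕ × ℕ) :=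
  (Lam3 n).filter (fun β => Amap n β ∈ Tset' n η)

/-- `z_k = 1` iff `f_k((1,0)) ≤ f_k((n,n+1))`. -/
def zk (n k : ℕ) : Bool := decide (fk k (1, 0) ≤ fk k (n, n+1))

/-- `t_l` in the recursive definition of `η_k`, where `O`, `E` are the odd- and
even-indexed partial sums `Σ_{j<l, j odd} d_{k,j}` and `Σ_{j<l, j even} d_{k,j}`. -/
noncomputable def tval (n k : ℕ) (l O E : ℕ) : ℕ :=
  let w := (if Odd l then E else O) + 1
  if ((zk n k = true) ↔ Odd l) then
    sSup {m : ℕ | (m : ℤ) * fk k (1, 0) ≤ fk k (w * n, w * (n+1))}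
  else
    sSup {m : ℕ | (m : ℤ) * fk k (n, n+1) ≤ fk k (w, 0)}

/-- The pair `(Σ_{j≤l, j odd} d_{k,j}, Σ_{j≤l, j even} d_{k,j})` of the recursion
defining `η_k`. -/
noncomputable def oeSums (n k : ℕ) : ℕ → ℕ × ℕ
  | 0 => (0, 0)
  | l + 1 =>
    let p := oeSums n k l
    let O := p.1
    let E := p.2
    let S := O + E
    let dnext := if S < n then
        min (n - S) (tval n k (l+1) O E - (if Odd (l+1) then O else E))
      else 0
    if Odd (l+1) then (O + dnext, E) else (O, E + dnext)

/-- `d_{k,l}`. -/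
noncomputable def dk (n k : ℕ) : ℕ → ℕ
  | 0 => 0
  | l + 1 =>
    let p := oeSums n k l
    let O := p.1
    let E := p.2
    let S := O + E
    if S < n then
      min (n - S) (tval n k (l+1) O E - (if Odd (l+1) then O else E))
    else 0

/-- `η_k = (z_k, d_{k,0}, …, d_{k,r})`, where `r` is the first index with
`Σ_{j=0}^{r} d_{k,j} = n`. -/
noncomputable def etak (n k : ℕ) : OmegaData :=
  { r := sInf {r | ∑ j ∈ range (r+1), dk n k j = n},
    z := zk n k,
    d := dk n k }

private lemma Sd_mono (η : OmegaData) {s t : ℕ} (h : s ≤ t) :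
    ∑ i ∈ range s, η.d i ≤ ∑ i ∈ range t, η.d i :=
  Finset.sum_le_sum_of_subset (Finset.range_subset_range.2 h)

private lemma tIdx_spec (n : ℕ) (η : OmegaData) (hη : η.IsOmega n)
    {j : ℕ} (hj1 : 1 ≤ j) (hjn : j ≤ n) :
    1 ≤ tIdx η j ∧ tIdx η j ≤ η.r ∧
      (∑ i ∈ range (tIdx η j), η.d i) < j ∧
      j ≤ ∑ i ∈ range (tIdx η j + 1), η.d i := by
  obtain ⟨hd0, hd1, hdr, hsum⟩ := hη
  have hmem : η.r ∈ {t | j ≤ ∑ i ∈ range (t+1), η.d i} := by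
    simp only [Set.mem_setOf_eq, hsum]; exact hjn
  have hin : tIdx η j ∈ {t | j ≤ ∑ i ∈ range (t+1), η.d i} := Nat.sInf_mem ⟨_, hmem⟩
  have hle : tIdx η j ≤ η.r := Nat.sInf_le hmem
  have hub : j ≤ ∑ i ∈ range (tIdx η j + 1), η.d i := hin
  have h1 : 1 ≤ tIdx η j := by
    rcases Nat.eq_zero_or_pos (tIdx η j) with h0 | h0
    · exfalso
      rw [h0] at hub
      simp [Finset.sum_range_one, hd0] at hub
      omega
    · exact h0
  refine ⟨h1, hle, ?_, hub⟩
  obtain ⟨s, hs⟩ : ∃ s, tIdx η j = s + 1 := ⟨tIdx η j - 1, by omega⟩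
  have hns : s ∉ {t | j ≤ ∑ i ∈ range (t+1), η.d i} :=
    Nat.notMem_of_lt_sInf (by change s < tIdx η j; omega)
  simp only [Set.mem_setOf_eq, not_le] at hns
  rw [hs]
  exact hns

private lemma tIdx_eq (η : OmegaData) {t j : ℕ}
    (h1 : (∑ i ∈ range t, η.d i) < j) (h2 : j ≤ ∑ i ∈ range (t+1), η.d i) :
    tIdx η j = t := by
  refine le_antisymm (Nat.sInf_le h2) (le_csInf ⟨_, h2⟩ ?_)
  intro s hs
  by_contra h
  push_neg at h
  have hm : ∑ i ∈ range (s+1), η.d i ≤ ∑ i ∈ range t, η.d i := Sd_mono η (by omega)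
  simp only [Set.mem_setOf_eq] at hs
  omega

/-- The `a` value of `vvec`. -/
private noncomputable def av (η : OmegaData) (j : ℕ) : ℕ :=
  (∑ i ∈ range (tIdx η j), if (Odd i ↔ Odd (tIdx η j)) then η.d i else 0)
    + (j - ∑ i ∈ range (tIdx η j), η.d i)

private lemma vvec_eq (η : OmegaData) (j : ℕ) :
    vvec η j = if (η.z = true) ↔ Odd (tIdx η j) then (av η j, 0) else (0, av η j) := rfl

private lemma key (n : ℕ) (η : OmegaData) (hη : η.IsOmega n)
    {l j : ℕ} (hl1 : 1 ≤ l) (hlj : l < j) (hjn : j ≤ n)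
    (hpar : Odd (tIdx η l) ↔ Odd (tIdx η j)) :
    av η j + (n - j) ≤ av η l + (n - l) ∧
      (av η j + (n - j) = av η l + (n - l) ↔
        ∃ t, 1 ≤ t ∧ t ≤ η.r ∧ (∑ i ∈ range t, η.d i) < l ∧
          j ≤ ∑ i ∈ range (t+1), η.d i) := by
  obtain ⟨hl1', hlr, hll, hlu⟩ := tIdx_spec n η hη hl1 (by omega)
  obtain ⟨hj1', hjr, hjl, hju⟩ := tIdx_spec n η hη (show 1 ≤ j by omega) hjn
  have hd1 := hη.2.1
  have hmono : tIdx η l ≤ tIdx η j := Nat.sInf_le (le_trans hlj.le hju)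
  have havj : av η j = (∑ i ∈ range (tIdx η j),
      if (Odd i ↔ Odd (tIdx η j)) then η.d i else 0)
        + (j - ∑ i ∈ range (tIdx η j), η.d i) := rfl
  have havl : av η l = (∑ i ∈ range (tIdx η l),
      if (Odd i ↔ Odd (tIdx η l)) then η.d i else 0)
        + (l - ∑ i ∈ range (tIdx η l), η.d i) := rfl
  have hteq : ∀ t : ℕ, (∑ i ∈ range t, η.d i) < j → j ≤ ∑ i ∈ range (t+1), η.d i →
      tIdx η j = t := fun t h1 h2 => tIdx_eq η h1 h2
  have hteql : ∀ t : ℕ, (∑ i ∈ range t, η.d i) < l → l ≤ ∑ i ∈ range (t+1), η.d i →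
      tIdx η l = t := fun t h1 h2 => tIdx_eq η h1 h2
  generalize htl : tIdx η l = tl at *
  generalize htj : tIdx η j = tj at *
  have hSmono : (∑ i ∈ range tl, η.d i) ≤ ∑ i ∈ range tj, η.d i := Sd_mono η hmono
  have hpe : Odd tl = Odd tj := propext hpar
  rcases eq_or_lt_of_le hmono with heq | hlt
  · -- same block: equality
    subst heq
    have heqv : av η j + (n - j) = av η l + (n - l) := by
      rw [havj, havl]; omega
    refine ⟨le_of_eq heqv, ?_⟩
    rw [heqv]
    simp only [true_iff]
    exact ⟨tl, hl1', hlr, hll, hju⟩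
  · -- tl < tj : strict inequality
    have hparmod : tl % 2 = tj % 2 := by
      rw [Nat.odd_iff, Nat.odd_iff] at hpar
      omega
    have h2 : tl + 2 ≤ tj := by omega
    simp only [hpe] at havl
    have hsplitd : (∑ i ∈ range tl, η.d i) + (∑ i ∈ Finset.Ico tl tj, η.d i)
        = ∑ i ∈ range tj, η.d i := by
      rw [Finset.range_eq_Ico, Finset.range_eq_Ico]
      exact Finset.sum_Ico_consecutive _ (Nat.zero_le _) (le_of_lt hlt)
    have hsplitA : (∑ i ∈ range tl, if (Odd i ↔ Odd tj) then η.d i else 0)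
        + (∑ i ∈ Finset.Ico tl tj, if (Odd i ↔ Odd tj) then η.d i else 0)
        = ∑ i ∈ range tj, if (Odd i ↔ Odd tj) then η.d i else 0 := by
      rw [Finset.range_eq_Ico, Finset.range_eq_Ico]
      exact Finset.sum_Ico_consecutive _ (Nat.zero_le _) (le_of_lt hlt)
    have hBB' : (∑ i ∈ Finset.Ico tl tj, if (Odd i ↔ Odd tj) then η.d i else 0)
        + (∑ i ∈ Finset.Ico tl tj, if (Odd i ↔ Odd tj) then 0 else η.d i)
        = ∑ i ∈ Finset.Ico tl tj, η.d i := by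
      rw [← Finset.sum_add_distrib]
      refine Finset.sum_congr rfl fun i _ => ?_
      split_ifs <;> omega
    have hB' : η.d (tl + 1) ≤ ∑ i ∈ Finset.Ico tl tj,
        if (Odd i ↔ Odd tj) then 0 else η.d i := by
      have hmem : tl + 1 ∈ Finset.Ico tl tj := Finset.mem_Ico.2 ⟨by omega, by omega⟩
      have hcond : ¬ (Odd (tl + 1) ↔ Odd tj) := by
        rw [Nat.odd_iff, Nat.odd_iff]
        omega
      calc η.d (tl + 1) = if (Odd (tl + 1) ↔ Odd tj) then 0 else η.d (tl + 1) := by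
            rw [if_neg hcond]
        _ ≤ _ := Finset.single_le_sum (f := fun i => if (Odd i ↔ Odd tj) then 0 else η.d i)
            (fun i _ => Nat.zero_le _) hmem
    have hd1' : 1 ≤ η.d (tl + 1) := hd1 _ (by omega) (by omega)
    have hstrict : av η j + (n - j) < av η l + (n - l) := by
      rw [havj, havl]
      omega
    refine ⟨le_of_lt hstrict, ?_, ?_⟩
    · intro h; omega
    · rintro ⟨t, ht1, htr, htL, htU⟩
      have h1 : t = tl := (hteql t htL (by omega)).symm
      have h2' : t = tj := (hteq t (by omega) htU).symm
      omega

theorem stmt11 (n : ℕ) (hn : 1 ≤ n) (η : OmegaData) (hη : η.IsOmega n)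
    (l j : ℕ) (hl1 : 1 ≤ l) (hlj : l < j) (hjn : j ≤ n) :
    (∀ pl pj : ℕ, vvec η l = (pl, 0) → vvec η j = (pj, 0) →
      (pj + (n - j) ≤ pl + (n - l) ∧
        (pj + (n - j) = pl + (n - l) ↔
          ∃ t, 1 ≤ t ∧ t ≤ η.r ∧ (∑ i ∈ range t, η.d i) < l ∧
            j ≤ ∑ i ∈ range (t+1), η.d i))) ∧
    (∀ pl pj : ℕ, vvec η l = (0, pl) → vvec η j = (0, pj) →
      (pj + (n - j) ≤ pl + (n - l) ∧
        (pj + (n - j) = pl + (n - l) ↔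
          ∃ t, 1 ≤ t ∧ t ≤ η.r ∧ (∑ i ∈ range t, η.d i) < l ∧
            j ≤ ∑ i ∈ range (t+1), η.d i))) := by
  have havposl : 1 ≤ av η l := by
    obtain ⟨_, _, h3, _⟩ := tIdx_spec n η hη hl1 (by omega)
    unfold av; omega
  have havposj : 1 ≤ av η j := by
    obtain ⟨_, _, h3, _⟩ := tIdx_spec n η hη (show 1 ≤ j by omega) hjn
    unfold av; omega
  constructor
  · intro pl pj h1 h2
    rw [vvec_eq] at h1 h2
    split_ifs at h1 h2 with hc1 hc2 hc2
    · obtain ⟨rfl, -⟩ := Prod.mk.inj h1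
      obtain ⟨rfl, -⟩ := Prod.mk.inj h2
      exact key n η hη hl1 hlj hjn (by tauto)
    all_goals
      exfalso
      obtain ⟨ha, hb⟩ := Prod.mk.inj h1
      obtain ⟨hc, hd⟩ := Prod.mk.inj h2
      omega
  · intro pl pj h1 h2
    rw [vvec_eq] at h1 h2
    split_ifs at h1 h2 with hc1 hc2 hc2
    case _ | _ | _ =>
      exfalso
      obtain ⟨ha, hb⟩ := Prod.mk.inj h1
      obtain ⟨hc, hd⟩ := Prod.mk.inj h2
      omega
    · obtain ⟨-, rfl⟩ := Prod.mk.inj h1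
      obtain ⟨-, rfl⟩ := Prod.mk.inj h2
      exact key n η hη hl1 hlj hjn (by tauto)
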